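/- Let g be a finite-dimensional Lie algebra over a field of characteristic zero such that the first and second Chevalley–Eilenberg cohomology groups H^1(g, V) and H^2(g, V) vanish for all finite-dimensional g-modules V (e.g. g semisimple). Let A be a Lie algebra, π: A → g a surjective Lie algebra morphism whose kernel r is a finite-dimensional solvable ideal. Then π admits a Lie algebra section g → A. -/

import Mathlib

universe u v

/-- A-level 2-cocycle identity for the curvature of a linear section. -/
private lemma cocycleA {K : Type v} [Field K] {g : Type u} [LieRing g] [LieAlgebra K g]
    {A : Type u} [LieRing A] [LieAlgebra K A] (σ : g →ₗ[K] A) (x y z : g) :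
    (⁅σ x, ⁅σ y, σ z⁆ - σ ⁅y, z⁆⁆)
      - (⁅σ y, ⁅σ x, σ z⁆ - σ ⁅x, z⁆⁆)
      + (⁅σ z, ⁅σ x, σ y⁆ - σ ⁅x, y⁆⁆)
      - (⁅σ ⁅x, y⁆, σ z⁆ - σ ⁅⁅x, y⁆, z⁆)
      + (⁅σ ⁅x, z⁆, σ y⁆ - σ ⁅⁅x, z⁆, y⁆)
      - (⁅σ ⁅y, z⁆, σ x⁆ - σ ⁅⁅y, z⁆, x⁆) = 0 := by
  simp only [lie_sub]
  rw [leibniz_lie (σ x) (σ y) (σ z), ← lie_skew (σ z) ⁅σ x, σ y⁆,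
    ← lie_skew (σ x) (σ ⁅y, z⁆), ← lie_skew (σ y) (σ ⁅x, z⁆), ← lie_skew (σ z) (σ ⁅x, y⁆),
    ← lie_skew (⁅x, z⁆ : g) y, ← lie_skew (⁅y, z⁆ : g) x, leibniz_lie x y z]
  simp only [map_neg, map_add]
  abel

private theorem split_abelian
    {K : Type v} [Field K]
    {g : Type u} [LieRing g] [LieAlgebra K g] [FiniteDimensional K g]
    (h2 : ∀ (V : Type u) [AddCommGroup V] [Module K V] [LieRingModule g V]
      [LieModule K g V] [FiniteDimensional K V],
      ∀ ω : g →ₗ[K] g →ₗ[K] V, (∀ x : g, ω x x = 0) →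
        (∀ x y z : g,
          ⁅x, ω y z⁆ - ⁅y, ω x z⁆ + ⁅z, ω x y⁆
            - ω ⁅x, y⁆ z + ω ⁅x, z⁆ y - ω ⁅y, z⁆ x = 0) →
        ∃ φ : g →ₗ[K] V, ∀ x y : g, ω x y = ⁅x, φ y⁆ - ⁅y, φ x⁆ - φ ⁅x, y⁆)
    {A : Type u} [LieRing A] [LieAlgebra K A]
    (π : A →ₗ⁅K⁆ g) (hsurj : Function.Surjective π)
    (hfin : FiniteDimensional K ↥π.ker) (hab : IsLieAbelian ↥π.ker) :
    ∃ s : g →ₗ⁅K⁆ A, ∀ ξ : g, π (s ξ) = ξ := by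
  classical
  obtain ⟨σ, hσ'⟩ := (π : A →ₗ[K] g).exists_rightInverse_of_surjective
    (LinearMap.range_eq_top.mpr hsurj)
  have hσ : ∀ x : g, π (σ x) = x := fun x => LinearMap.congr_fun hσ' x
  -- brackets of kernel elements vanish
  have hker0 : ∀ a b : A, a ∈ π.ker → b ∈ π.ker → ⁅a, b⁆ = 0 := by
    intro a b ha hb
    letI := hab
    exact congrArg Subtype.val (trivial_lie_zero ↥π.ker ↥π.ker ⟨a, ha⟩ ⟨b, hb⟩)
  have hmem : ∀ x y : g, ⁅σ x, σ y⁆ - σ ⁅x, y⁆ ∈ π.ker := by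
    intro x y
    rw [LieHom.mem_ker, map_sub π]
    show π ⁅σ x, σ y⁆ - π (σ ⁅x, y⁆) = 0
    rw [LieHom.map_lie, hσ, hσ, hσ, sub_self]
  -- the g-module structure on the kernel
  letI : LieRingModule g ↥π.ker :=
    { bracket := fun x v => ⟨⁅σ x, (v : A)⁆, π.ker.lie_mem v.2⟩
      add_lie := fun x y v => Subtype.ext <| by
        show ⁅σ (x + y), (v : A)⁆ = ⁅σ x, (v : A)⁆ + ⁅σ y, (v : A)⁆
        rw [map_add, add_lie]
      lie_add := fun x v w => Subtype.ext <| by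
        show ⁅σ x, ((v : A) + (w : A))⁆ = ⁅σ x, (v : A)⁆ + ⁅σ x, (w : A)⁆
        rw [lie_add]
      leibniz_lie := fun x y v => Subtype.ext <| by
        have h0 : ⁅⁅σ x, σ y⁆ - σ ⁅x, y⁆, (v : A)⁆ = 0 := hker0 _ _ (hmem x y) v.2
        rw [sub_lie] at h0
        have h1 : ⁅σ ⁅x, y⁆, (v : A)⁆ = ⁅⁅σ x, σ y⁆, (v : A)⁆ := (sub_eq_zero.mp h0).symm
        show ⁅σ x, ⁅σ y, (v : A)⁆⁆ = ⁅σ ⁅x, y⁆, (v : A)⁆ + ⁅σ y, ⁅σ x, (v : A)⁆⁆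
        rw [h1]
        exact leibniz_lie _ _ _ }
  have cval : ∀ (x : g) (w : ↥π.ker), ((⁅x, w⁆ : ↥π.ker) : A) = ⁅σ x, (w : A)⁆ := fun _ _ => rfl
  letI : LieModule K g ↥π.ker :=
    { smul_lie := fun t x v => Subtype.ext <| by
        simp only [cval, SetLike.val_smul, map_smul, smul_lie]
      lie_smul := fun t x v => Subtype.ext <| by
        simp only [cval, SetLike.val_smul, lie_smul] }
  -- the curvature 2-cocycle
  let ω : g →ₗ[K] g →ₗ[K] ↥π.ker := LinearMap.mk₂ K
    (fun x y => (⟨⁅σ x, σ y⁆ - σ ⁅x, y⁆, hmem x y⟩ : ↥π.ker))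
    (fun x x' y => Subtype.ext <| by
      show ⁅σ (x + x'), σ y⁆ - σ ⁅x + x', y⁆
        = (⁅σ x, σ y⁆ - σ ⁅x, y⁆) + (⁅σ x', σ y⁆ - σ ⁅x', y⁆)
      rw [map_add, add_lie, add_lie, map_add]; abel)
    (fun t x y => Subtype.ext <| by
      show ⁅σ (t • x), σ y⁆ - σ ⁅t • x, y⁆ = t • (⁅σ x, σ y⁆ - σ ⁅x, y⁆)
      rw [map_smul, smul_lie, smul_lie, map_smul, smul_sub])
    (fun x y y' => Subtype.ext <| by
      show ⁅σ x, σ (y + y')⁆ - σ ⁅x, y + y'⁆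
        = (⁅σ x, σ y⁆ - σ ⁅x, y⁆) + (⁅σ x, σ y'⁆ - σ ⁅x, y'⁆)
      rw [map_add, lie_add, lie_add, map_add]; abel)
    (fun t x y => Subtype.ext <| by
      show ⁅σ x, σ (t • y)⁆ - σ ⁅x, t • y⁆ = t • (⁅σ x, σ y⁆ - σ ⁅x, y⁆)
      rw [map_smul, lie_smul, lie_smul, map_smul, smul_sub])
  have ωval : ∀ x y : g, ((ω x y : ↥π.ker) : A) = ⁅σ x, σ y⁆ - σ ⁅x, y⁆ := fun _ _ => rfl
  have halt : ∀ x : g, ω x x = 0 := by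
    intro x
    apply Subtype.ext
    show ⁅σ x, σ x⁆ - σ ⁅x, x⁆ = ((0 : ↥π.ker) : A)
    rw [lie_self, lie_self, map_zero, sub_zero, ZeroMemClass.coe_zero]
  have hcoc : ∀ x y z : g,
      ⁅x, ω y z⁆ - ⁅y, ω x z⁆ + ⁅z, ω x y⁆
        - ω ⁅x, y⁆ z + ω ⁅x, z⁆ y - ω ⁅y, z⁆ x = 0 := by
    intro x y z
    apply Subtype.ext
    simp only [AddSubgroupClass.coe_sub, AddMemClass.coe_add, ZeroMemClass.coe_zero, cval, ωval]
    exact cocycleA σ x y z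
  obtain ⟨φ, hφ⟩ := h2 (↥π.ker) ω halt hcoc
  -- the corrected section
  refine ⟨{ toLinearMap := σ - (π.ker.incl : ↥π.ker →ₗ[K] A) ∘ₗ φ, map_lie' := ?_ }, ?_⟩
  · intro x y
    have key := congrArg Subtype.val (hφ x y)
    simp only [AddSubgroupClass.coe_sub, cval, ωval] at key
    have key' : ⁅σ x, σ y⁆
        = ⁅σ x, ((φ y : ↥π.ker) : A)⁆ - ⁅σ y, ((φ x : ↥π.ker) : A)⁆ - ((φ ⁅x, y⁆ : ↥π.ker) : A)
          + σ ⁅x, y⁆ := by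
      rw [← key]; abel
    show σ ⁅x, y⁆ - ((φ ⁅x, y⁆ : ↥π.ker) : A)
      = ⁅σ x - ((φ x : ↥π.ker) : A), σ y - ((φ y : ↥π.ker) : A)⁆
    rw [lie_sub, sub_lie, sub_lie,
      hker0 _ _ (φ x).2 (φ y).2, ← lie_skew ((φ x : ↥π.ker) : A) (σ y), key']
    abel
  · intro ξ
    show π (σ ξ - ((φ ξ : ↥π.ker) : A)) = ξ
    rw [map_sub π]
    show π (σ ξ) - π ((φ ξ : ↥π.ker) : A) = ξ
    rw [hσ, LieHom.mem_ker.mp (φ ξ).2, sub_zero]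

private theorem split_ind
    {K : Type v} [Field K]
    {g : Type u} [LieRing g] [LieAlgebra K g] [FiniteDimensional K g]
    (h2 : ∀ (V : Type u) [AddCommGroup V] [Module K V] [LieRingModule g V]
      [LieModule K g V] [FiniteDimensional K V],
      ∀ ω : g →ₗ[K] g →ₗ[K] V, (∀ x : g, ω x x = 0) →
        (∀ x y z : g,
          ⁅x, ω y z⁆ - ⁅y, ω x z⁆ + ⁅z, ω x y⁆
            - ω ⁅x, y⁆ z + ω ⁅x, z⁆ y - ω ⁅y, z⁆ x = 0) →
        ∃ φ : g →ₗ[K] V, ∀ x y : g, ω x y = ⁅x, φ y⁆ - ⁅y, φ x⁆ - φ ⁅x, y⁆) :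
    ∀ (n : ℕ) {A : Type u} [LieRing A] [LieAlgebra K A] (π : A →ₗ⁅K⁆ g),
      Function.Surjective π → FiniteDimensional K ↥π.ker →
      LieAlgebra.derivedSeriesOfIdeal K A n π.ker = ⊥ →
      ∃ s : g →ₗ⁅K⁆ A, ∀ ξ : g, π (s ξ) = ξ := by
  intro n
  induction n with
  | zero =>
    intro A _ _ π hsurj hfin hD
    rw [LieAlgebra.derivedSeriesOfIdeal_zero] at hD
    have hinj : Function.Injective π := (LieHom.ker_eq_bot π).mp hD
    let e := LieEquiv.ofBijective π ⟨hinj, hsurj⟩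
    exact ⟨e.symm.toLieHom, fun ξ => e.apply_symm_apply ξ⟩
  | succ n ih =>
    intro A _ _ π hsurj hfin hD
    -- the derived ideal
    set J : LieIdeal K A := ⁅π.ker, π.ker⁆ with hJdef
    have hJle : J ≤ π.ker := LieSubmodule.lie_le_left _ _
    have hDJ : LieAlgebra.derivedSeriesOfIdeal K A n J = ⊥ := by
      have h1 : LieAlgebra.derivedSeriesOfIdeal K A 1 π.ker = J := by
        rw [LieAlgebra.derivedSeriesOfIdeal_succ, LieAlgebra.derivedSeriesOfIdeal_zero]
      rw [← h1, ← LieAlgebra.derivedSeriesOfIdeal_add]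
      exact hD
    -- the quotient by the derived ideal
    let mkQ : A →ₗ⁅K⁆ A ⧸ J := { J.toSubmodule.mkQ with map_lie' := rfl }
    have hmkQsurj : Function.Surjective mkQ := Submodule.mkQ_surjective _
    have hliftle : J.toSubmodule ≤ LinearMap.ker (π : A →ₗ[K] g) :=
      fun a ha => LinearMap.mem_ker.mpr (LieHom.mem_ker.mp (hJle ha))
    let π' : (A ⧸ J) →ₗ⁅K⁆ g :=
      { J.toSubmodule.liftQ (π : A →ₗ[K] g) hliftle with
        map_lie' := by
          rintro x y
          obtain ⟨a, rfl⟩ := hmkQsurj x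
          obtain ⟨b, rfl⟩ := hmkQsurj y
          show (J.toSubmodule.liftQ (π : A →ₗ[K] g) hliftle) ⁅mkQ a, mkQ b⁆ = _
          have : (⁅mkQ a, mkQ b⁆ : A ⧸ J) = mkQ ⁅a, b⁆ := rfl
          rw [this]
          show π ⁅a, b⁆ = ⁅π a, π b⁆
          exact π.map_lie a b }
    have hπ'mk : ∀ a : A, π' (mkQ a) = π a := fun a => rfl
    have hsurj' : Function.Surjective π' := fun ξ => by
      obtain ⟨a, ha⟩ := hsurj ξ; exact ⟨mkQ a, ha⟩
    have hmkker : ∀ a : A, mkQ a = 0 ↔ a ∈ J := fun a => Submodule.Quotient.mk_eq_zero _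
    have hker' : ∀ q : A ⧸ J, q ∈ π'.ker ↔ ∃ a ∈ π.ker, mkQ a = q := by
      intro q
      constructor
      · intro hq
        obtain ⟨a, rfl⟩ := hmkQsurj q
        exact ⟨a, LieHom.mem_ker.mpr (LieHom.mem_ker.mp hq), rfl⟩
      · rintro ⟨a, ha, rfl⟩
        exact LieHom.mem_ker.mpr (LieHom.mem_ker.mp ha)
    -- the kernel of π' is abelian
    have hab' : IsLieAbelian ↥π'.ker := by
      constructor
      intro u v
      obtain ⟨a, ha, hua⟩ := (hker' u.1).mp u.2
      obtain ⟨b, hb, hvb⟩ := (hker' v.1).mp v.2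
      apply Subtype.ext
      show ⁅(u : A ⧸ J), (v : A ⧸ J)⁆ = 0
      rw [← hua, ← hvb]
      have : (⁅mkQ a, mkQ b⁆ : A ⧸ J) = mkQ ⁅a, b⁆ := rfl
      rw [this]
      exact (hmkker _).mpr (LieSubmodule.lie_mem_lie ha hb)
    -- the kernel of π' is finite-dimensional
    have hfin' : FiniteDimensional K ↥π'.ker := by
      let ψ : ↥π.ker →ₗ[K] ↥π'.ker := LinearMap.codRestrict (π'.ker : Submodule K (A ⧸ J))
        (J.toSubmodule.mkQ.comp (π.ker : Submodule K A).subtype)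
        (fun v => (hker' _).mpr ⟨v.1, v.2, rfl⟩)
      have hψ : Function.Surjective ψ := by
        rintro ⟨q, hq⟩
        obtain ⟨a, ha, hqa⟩ := (hker' q).mp hq
        exact ⟨⟨a, ha⟩, Subtype.ext hqa⟩
      exact Module.Finite.of_surjective ψ hψ
    obtain ⟨s', hs'⟩ := split_abelian h2 π' hsurj' hfin' hab'
    -- pull back along the quotient
    let B : LieSubalgebra K A := LieSubalgebra.comap mkQ s'.range
    have hmemB : ∀ a : A, a ∈ B ↔ ∃ ξ : g, s' ξ = mkQ a := fun a => Iff.rfl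
    let πB : ↥B →ₗ⁅K⁆ g := π.comp B.incl
    have hsurjB : Function.Surjective πB := by
      intro ξ
      obtain ⟨a, ha⟩ := hsurj ξ
      have h0 : mkQ a - s' ξ ∈ π'.ker := by
        rw [LieHom.mem_ker, map_sub π', hπ'mk, ha, hs', sub_self]
      obtain ⟨k, hk, hk2⟩ := (hker' _).mp h0
      refine ⟨⟨a - k, (hmemB _).mpr ⟨ξ, ?_⟩⟩, ?_⟩
      · rw [map_sub mkQ, hk2]; abel
      · show π (a - k) = ξ
        rw [map_sub π, ha, LieHom.mem_ker.mp hk, sub_zero]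
    have hkerB : ∀ b : ↥B, b ∈ πB.ker ↔ (b : A) ∈ J := by
      intro b
      constructor
      · intro hb
        obtain ⟨ξ, hξ⟩ := (hmemB _).mp b.2
        have hξ0 : ξ = 0 := by
          have h1 : π' (s' ξ) = ξ := hs' ξ
          rw [hξ, hπ'mk] at h1
          rw [← h1]
          exact LieHom.mem_ker.mp hb
        rw [hξ0, map_zero s'] at hξ
        exact (hmkker _).mp hξ.symm
      · intro hb
        exact LieHom.mem_ker.mpr (LieHom.mem_ker.mp (hJle hb))
    have hBJ : ∀ a : A, a ∈ J → a ∈ B := by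
      intro a ha
      refine (hmemB _).mpr ⟨0, ?_⟩
      rw [map_zero s', ((hmkker _).mpr ha).symm]
    -- the kernel of πB is equivalent to J
    let e : (↥πB.ker) ≃ₗ⁅K⁆ ↥J :=
      { toFun := fun b => ⟨b.1.1, (hkerB b.1).mp b.2⟩
        map_add' := fun u v => rfl
        map_smul' := fun t u => rfl
        map_lie' := rfl
        invFun := fun j => ⟨⟨j.1, hBJ j.1 j.2⟩, (hkerB _).mpr j.2⟩
        left_inv := fun u => rfl
        right_inv := fun j => rfl }
    have hfinJ : FiniteDimensional K ↥J :=
      Submodule.finiteDimensional_of_le (show J.toSubmodule ≤ (π.ker).toSubmodule from hJle)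
    have hfinB : FiniteDimensional K ↥πB.ker := Module.Finite.equiv e.symm.toLinearEquiv
    have hDB : LieAlgebra.derivedSeriesOfIdeal K ↥B n πB.ker = ⊥ := by
      rw [← LieIdeal.derivedSeries_eq_bot_iff]
      have hJn : LieAlgebra.derivedSeries K ↥J n = ⊥ :=
        (LieIdeal.derivedSeries_eq_bot_iff J n).mpr hDJ
      have hmap := LieIdeal.derivedSeries_map_eq (f := e.toLieHom) n e.surjective
      rw [hJn] at hmap
      have hle := (LieIdeal.map_eq_bot_iff).mp hmap
      rw [(LieHom.ker_eq_bot e.toLieHom).mpr e.injective] at hle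
      exact le_bot_iff.mp hle
    obtain ⟨sB, hsB⟩ := ih πB hsurjB hfinB hDB
    exact ⟨B.incl.comp sB, fun ξ => hsB ξ⟩

/-- **Levi–Malcev splitting.** Let `g` be a finite-dimensional Lie algebra over a field `K` of
characteristic zero such that the first and second Chevalley–Eilenberg cohomology groups
`H¹(g,V)` and `H²(g,V)` vanish for all finite-dimensional `g`-modules `V` (e.g. `g`
semisimple): every 1-cocycle is inner and every 2-cocycle is a coboundary.  Let `A` be a Lie
algebra and `π : A → g` a surjective Lie algebra morphism whose kernel is a finite-dimensional
solvable ideal.  Then `π` admits a Lie algebra section `g → A`. -/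
theorem levi_malcev_of_whitehead
    {K : Type v} [Field K] [CharZero K]
    {g : Type u} [LieRing g] [LieAlgebra K g] [FiniteDimensional K g]
    (h1 : ∀ (V : Type u) [AddCommGroup V] [Module K V] [LieRingModule g V]
      [LieModule K g V] [FiniteDimensional K V],
      ∀ f : g →ₗ[K] V, (∀ x y : g, f ⁅x, y⁆ = ⁅x, f y⁆ - ⁅y, f x⁆) →
        ∃ v : V, ∀ x : g, f x = ⁅x, v⁆)
    (h2 : ∀ (V : Type u) [AddCommGroup V] [Module K V] [LieRingModule g V]
      [LieModule K g V] [FiniteDimensional K V],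
      ∀ ω : g →ₗ[K] g →ₗ[K] V, (∀ x : g, ω x x = 0) →
        (∀ x y z : g,
          ⁅x, ω y z⁆ - ⁅y, ω x z⁆ + ⁅z, ω x y⁆
            - ω ⁅x, y⁆ z + ω ⁅x, z⁆ y - ω ⁅y, z⁆ x = 0) →
        ∃ φ : g →ₗ[K] V, ∀ x y : g, ω x y = ⁅x, φ y⁆ - ⁅y, φ x⁆ - φ ⁅x, y⁆)
    {A : Type u} [LieRing A] [LieAlgebra K A]
    (π : A →ₗ⁅K⁆ g) (hsurj : Function.Surjective π)
    (hsolv : LieAlgebra.IsSolvable ↥π.ker)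
    (hfin : FiniteDimensional K ↥π.ker) :
    ∃ s : g →ₗ⁅K⁆ A, ∀ ξ : g, π (s ξ) = ξ := by
  obtain ⟨n, hn⟩ := (LieAlgebra.isSolvable_iff K _).mp hsolv
  exact split_ind h2 n π hsurj hfin ((LieIdeal.derivedSeries_eq_bot_iff π.ker n).mp hn)
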